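/- For every nonnegative integer n, Q_{12}^2(3n+2) ≡ 0 (mod 2); that is, the number of partitions of 3n+2 into distinct parts with no part congruent to 2 or 10 modulo 12 is even. -/

import Mathlib

open Finset

noncomputable section Stmt7Aux

open scoped Classical

namespace Stmt7

/-! ### Basic counting sets -/

/-- all elements positive and satisfy `P` -/
def good (P : ℕ → Prop) (A : Finset ℕ) : Prop := ∀ x ∈ A, 0 < x ∧ P x

/-- subsets (distinct-part partitions) with parts satisfying `P`, summing to `n` -/
def DS (P : ℕ → Prop) (n : ℕ) : Finset (Finset ℕ) :=
  ((Finset.range (n+1)).powerset).filter (fun A => good P A ∧ A.sum id = n)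

/-- pairs of distinct-part partitions with total sum `n` -/
def DP (P T : ℕ → Prop) (n : ℕ) : Finset (Finset ℕ × Finset ℕ) :=
  (((Finset.range (n+1)).powerset) ×ˢ ((Finset.range (n+1)).powerset)).filter
    (fun p => good P p.1 ∧ good T p.2 ∧ p.1.sum id + p.2.sum id = n)

lemma le_sum_of_mem {A : Finset ℕ} {x : ℕ} (hx : x ∈ A) : x ≤ A.sum id :=
  Finset.single_le_sum (f := id) (fun i _ => Nat.zero_le i) hx

lemma mem_DS {P : ℕ → Prop} {n : ℕ} {A : Finset ℕ} :
    A ∈ DS P n ↔ good P A ∧ A.sum id = n := by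
  simp only [DS, mem_filter, Finset.mem_powerset, and_iff_right_iff_imp]
  rintro ⟨h1, h2⟩ x hx
  exact Finset.mem_range.2 (by have := le_sum_of_mem hx; omega)

lemma mem_DP {P T : ℕ → Prop} {n : ℕ} {p : Finset ℕ × Finset ℕ} :
    p ∈ DP P T n ↔ good P p.1 ∧ good T p.2 ∧ p.1.sum id + p.2.sum id = n := by
  simp only [DP, mem_filter, Finset.mem_product, Finset.mem_powerset, and_iff_right_iff_imp]
  rintro ⟨h1, h2, h3⟩
  constructor <;> intro x hx <;> refine Finset.mem_range.2 ?_
  · have := le_sum_of_mem hx; omega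
  · have := le_sum_of_mem hx; omega

/-! ### Parity via involutions -/

lemma card_modEq_fixed {α : Type*} [DecidableEq α] :
    ∀ (m : ℕ) (s : Finset α) (f : α → α), s.card ≤ m → (∀ a ∈ s, f a ∈ s) →
    (∀ a ∈ s, f (f a) = a) →
    s.card % 2 = (s.filter (fun a => f a = a)).card % 2 := by
  intro m
  induction m with
  | zero =>
    intro s f hle _ _
    have : s = ∅ := Finset.card_eq_zero.mp (by omega)
    subst this; simp
  | succ m ih =>
    intro s f hle h1 h2
    by_cases hex : ∃ a ∈ s, f a ≠ a
    · obtain ⟨a, ha, hfa⟩ := hex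
      have hfas : f a ∈ s := h1 a ha
      set s' := (s.erase a).erase (f a) with hs'
      have hmem' : ∀ b, b ∈ s' ↔ (b ≠ f a ∧ b ≠ a ∧ b ∈ s) := by
        intro b; simp [hs', Finset.mem_erase]
      have hcard : s.card = s'.card + 2 := by
        rw [hs', Finset.card_erase_of_mem (Finset.mem_erase.2 ⟨hfa, hfas⟩),
          Finset.card_erase_of_mem ha]
        have h2card : 2 ≤ s.card := Finset.one_lt_card.mpr ⟨a, ha, f a, hfas, fun h => hfa h.symm⟩
        omega
      have h1' : ∀ b ∈ s', f b ∈ s' := by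
        intro b hb
        obtain ⟨hbfa, hba, hbs⟩ := (hmem' b).1 hb
        refine (hmem' (f b)).2 ⟨?_, ?_, h1 b hbs⟩
        · intro hq
          exact hba (by rw [← h2 b hbs, hq, h2 a ha])
        · intro hq
          exact hbfa (by rw [← h2 b hbs, hq])
      have h2' : ∀ b ∈ s', f (f b) = b := by
        intro b hb
        obtain ⟨_, _, hbs⟩ := (hmem' b).1 hb
        exact h2 b hbs
      have hfilter : s.filter (fun x => f x = x) = s'.filter (fun x => f x = x) := by
        ext b
        simp only [Finset.mem_filter, hmem']
        constructor
        · rintro ⟨hbs, hfix⟩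
          refine ⟨⟨?_, ?_, hbs⟩, hfix⟩
          · rintro rfl
            have hq := h2 a ha
            rw [hfix] at hq
            exact hfa hq
          · rintro rfl
            exact hfa hfix
        · rintro ⟨⟨_, _, hbs⟩, hfix⟩
          exact ⟨hbs, hfix⟩
      rw [hcard, hfilter]
      have := ih s' f (by omega) h1' h2'
      omega
    · push_neg at hex
      rw [Finset.filter_true_of_mem hex]

/-! ### doubling and halving -/

def dbl (E : Finset ℕ) : Finset ℕ := E.image (fun x => 2*x)
def hlf (D : Finset ℕ) : Finset ℕ := D.image (fun x => x/2)

lemma hlf_dbl (E : Finset ℕ) : hlf (dbl E) = E := by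
  rw [hlf, dbl, Finset.image_image]
  have : ((fun x => x/2) ∘ (fun x => 2*x)) = id := by
    funext x; simp only [Function.comp_apply, id_eq]; omega
  rw [this, Finset.image_id]

lemma dbl_hlf {D : Finset ℕ} (h : ∀ x ∈ D, 2 ∣ x) : dbl (hlf D) = D := by
  rw [dbl, hlf, Finset.image_image]
  have : D.image ((fun x => 2*x) ∘ (fun x => x/2)) = D.image id := by
    apply Finset.image_congr
    intro x hx
    have := h x hx
    simp only [Function.comp_apply, id_eq]; omega
  rw [this, Finset.image_id]

lemma sum_dbl (E : Finset ℕ) : (dbl E).sum id = 2 * E.sum id := by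
  rw [dbl, Finset.sum_image (by intro x _ y _ h; dsimp only at h; omega)]
  simp [Finset.mul_sum]

lemma dbl_inj {E E' : Finset ℕ} (h : dbl E = dbl E') : E = E' := by
  rw [← hlf_dbl E, h, hlf_dbl]

/-! ### The toggle involution -/

lemma good_subset {P : ℕ → Prop} {A B : Finset ℕ} (h : good P A) (hs : B ⊆ A) : good P B :=
  fun x hx => h x (hs hx)

lemma union_sdiff_inter_eq_empty_iff {X Y : Finset ℕ} :
    (X ∪ Y) \ (X ∩ Y) = ∅ ↔ X = Y := by
  constructor
  · intro h
    ext x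
    have hx := Finset.eq_empty_iff_forall_notMem.1 h x
    simp only [Finset.mem_sdiff, Finset.mem_union, Finset.mem_inter, not_and] at hx
    constructor
    · intro hX
      by_contra hY
      exact hY (by tauto)
    · intro hY
      by_contra hX
      exact hX (by tauto)
  · rintro rfl
    simp

lemma sum_id_eq (s : Finset ℕ) : s.sum id = ∑ x ∈ s, x := rfl

lemma toggle (P T T2 : ℕ → Prop) (hsub : ∀ x, T x → P x)
    (hT2 : ∀ x, T2 x ↔ ∃ y, T y ∧ x = 2*y) (n : ℕ) :
    (DP P T n).card % 2 = (DP (fun x => P x ∧ ¬ T x) T2 n).card % 2 := by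
  set W : Finset ℕ × Finset ℕ → Finset ℕ :=
    fun p => ((p.1.filter T) ∪ p.2) \ ((p.1.filter T) ∩ p.2) with hW
  set v : Finset ℕ × Finset ℕ → ℕ := fun p => (W p).min.getD 0 with hv
  set f : Finset ℕ × Finset ℕ → Finset ℕ × Finset ℕ := fun p =>
    if W p = ∅ then p
    else (if v p ∈ p.1 then (p.1.erase (v p), insert (v p) p.2)
       else (insert (v p) p.1, p.2.erase (v p))) with hf
  have hvmem : ∀ p, W p ≠ ∅ → v p ∈ W p := by
    intro p h
    have hne : (W p).Nonempty := Finset.nonempty_iff_ne_empty.2 h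
    have h1 : ((W p).min' hne : WithBot ℕ) = (W p).min := Finset.coe_min' hne
    have h2 : v p = (W p).min' hne := by
      rw [hv]; dsimp only; rw [← h1]; rfl
    rw [h2]
    exact Finset.min'_mem _ _
  -- basic facts about the minimum of W
  have hTv : ∀ p ∈ DP P T n, W p ≠ ∅ →
      (0 < v p ∧ T (v p)) ∧
      ((v p ∈ p.1 ∧ v p ∉ p.2) ∨ (v p ∉ p.1 ∧ v p ∈ p.2)) := by
    intro p hp h
    obtain ⟨hg1, hg2, hsum⟩ := mem_DP.1 hp
    have hvm := hvmem p h
    simp only [hW, Finset.mem_sdiff, Finset.mem_union, Finset.mem_inter, Finset.mem_filter,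
      not_and] at hvm
    obtain ⟨hvu, hvn⟩ := hvm
    have hTv0 : 0 < v p ∧ T (v p) := by
      rcases hvu with ⟨hvA, hTv'⟩ | hvB
      · exact ⟨(hg1 _ hvA).1, hTv'⟩
      · exact ⟨(hg2 _ hvB).1, (hg2 _ hvB).2⟩
    refine ⟨hTv0, ?_⟩
    rcases hvu with ⟨hvA, hTv'⟩ | hvB
    · exact Or.inl ⟨hvA, fun hvB => hvn ⟨hvA, hTv'⟩ hvB⟩
    · by_cases hvA : v p ∈ p.1
      · exact absurd hvB (hvn ⟨hvA, hTv0.2⟩)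
      · exact Or.inr ⟨hvA, hvB⟩
  -- f maps the set to itself
  have hmaps : ∀ p ∈ DP P T n, f p ∈ DP P T n := by
    intro p hp
    obtain ⟨hg1, hg2, hsum⟩ := mem_DP.1 hp
    rw [hf]
    dsimp only
    split
    · exact hp
    · rename_i h
      obtain ⟨⟨hvpos, hvT⟩, hcases⟩ := hTv p hp h
      rcases hcases with ⟨hvA, hvB⟩ | ⟨hvA, hvB⟩
      · rw [if_pos hvA]
        refine mem_DP.2 ⟨good_subset hg1 (Finset.erase_subset _ _), ?_, ?_⟩
        · intro x hx
          rcases Finset.mem_insert.1 hx with rfl | hx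
          · exact ⟨hvpos, hvT⟩
          · exact hg2 x hx
        · have e1 := Finset.sum_erase_add p.1 id hvA
          have e2 := Finset.sum_insert (f := id) hvB
          simp only [sum_id_eq, id_eq] at e1 e2 hsum ⊢
          omega
      · rw [if_neg hvA]
        refine mem_DP.2 ⟨?_, good_subset hg2 (Finset.erase_subset _ _), ?_⟩
        · intro x hx
          rcases Finset.mem_insert.1 hx with rfl | hx
          · exact ⟨hvpos, hsub _ hvT⟩
          · exact hg1 x hx
        · have e1 := Finset.sum_erase_add p.2 id hvB
          have e2 := Finset.sum_insert (f := id) hvA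
          simp only [sum_id_eq, id_eq] at e1 e2 hsum ⊢
          omega
  -- f is an involution on the set
  have hinv : ∀ p ∈ DP P T n, f (f p) = p := by
    intro p hp
    obtain ⟨hg1, hg2, hsum⟩ := mem_DP.1 hp
    by_cases h : W p = ∅
    · have : f p = p := by rw [hf]; dsimp only; rw [if_pos h]
      rw [this, this]
    · obtain ⟨⟨hvpos, hvT⟩, hcases⟩ := hTv p hp h
      rcases hcases with ⟨hvA, hvB⟩ | ⟨hvA, hvB⟩
      · have hfp : f p = (p.1.erase (v p), insert (v p) p.2) := by
          rw [hf]; dsimp only; rw [if_neg h, if_pos hvA]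
        have hvF : v p ∈ p.1.filter T := Finset.mem_filter.2 ⟨hvA, hvT⟩
        have hWeq : W (p.1.erase (v p), insert (v p) p.2) = W p := by
          simp only [hW]
          have hfe : (p.1.erase (v p)).filter T = (p.1.filter T).erase (v p) := by
            ext x
            simp only [Finset.mem_filter, Finset.mem_erase]
            tauto
          rw [hfe]
          have hu : (p.1.filter T).erase (v p) ∪ insert (v p) p.2
              = p.1.filter T ∪ p.2 := by
            ext x
            simp only [Finset.mem_union, Finset.mem_erase, Finset.mem_insert]
            constructor
            · rintro (⟨_, hx⟩ | hxv | hx)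
              · exact Or.inl hx
              · exact Or.inl (hxv ▸ hvF)
              · exact Or.inr hx
            · rintro (hx | hx)
              · by_cases hxv : x = v p
                · exact Or.inr (Or.inl hxv)
                · exact Or.inl ⟨hxv, hx⟩
              · exact Or.inr (Or.inr hx)
          have hi : (p.1.filter T).erase (v p) ∩ insert (v p) p.2
              = p.1.filter T ∩ p.2 := by
            ext x
            simp only [Finset.mem_inter, Finset.mem_erase, Finset.mem_insert]
            constructor
            · rintro ⟨⟨hxv, hx⟩, hxv2 | hx2⟩
              · exact absurd hxv2 hxv
              · exact ⟨hx, hx2⟩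
            · rintro ⟨hx, hx2⟩
              exact ⟨⟨fun hxv => hvB (hxv ▸ hx2), hx⟩, Or.inr hx2⟩
          rw [hu, hi]
        rw [hfp, hf]
        dsimp only
        rw [hWeq, if_neg h]
        have hvq : v (p.1.erase (v p), insert (v p) p.2) = v p := by
          rw [hv]; dsimp only; rw [hWeq]
        rw [hvq]
        have : v p ∉ (p.1.erase (v p)) := Finset.notMem_erase _ _
        rw [if_neg this]
        rw [Finset.insert_erase hvA, Finset.erase_insert hvB]
      · have hfp : f p = (insert (v p) p.1, p.2.erase (v p)) := by
          rw [hf]; dsimp only; rw [if_neg h, if_neg hvA]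
        have hvnF : v p ∉ p.1.filter T := fun hx => hvA (Finset.mem_filter.1 hx).1
        have hWeq : W (insert (v p) p.1, p.2.erase (v p)) = W p := by
          simp only [hW]
          have hfe : (insert (v p) p.1).filter T = insert (v p) (p.1.filter T) := by
            ext x
            simp only [Finset.mem_filter, Finset.mem_insert]
            constructor
            · rintro ⟨hxv | hx, hT'⟩
              · exact Or.inl hxv
              · exact Or.inr ⟨hx, hT'⟩
            · rintro (hxv | ⟨hx, hT'⟩)
              · exact ⟨Or.inl hxv, hxv ▸ hvT⟩
              · exact ⟨Or.inr hx, hT'⟩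
          rw [hfe]
          have hu : insert (v p) (p.1.filter T) ∪ p.2.erase (v p)
              = p.1.filter T ∪ p.2 := by
            ext x
            simp only [Finset.mem_union, Finset.mem_erase, Finset.mem_insert]
            constructor
            · rintro ((hxv | hx) | ⟨_, hx⟩)
              · exact Or.inr (hxv ▸ hvB)
              · exact Or.inl hx
              · exact Or.inr hx
            · rintro (hx | hx)
              · exact Or.inl (Or.inr hx)
              · by_cases hxv : x = v p
                · exact Or.inl (Or.inl hxv)
                · exact Or.inr ⟨hxv, hx⟩
          have hi : insert (v p) (p.1.filter T) ∩ p.2.erase (v p)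
              = p.1.filter T ∩ p.2 := by
            ext x
            simp only [Finset.mem_inter, Finset.mem_erase, Finset.mem_insert]
            constructor
            · rintro ⟨hxv | hx, hxv2, hx2⟩
              · exact absurd hxv hxv2
              · exact ⟨hx, hx2⟩
            · rintro ⟨hx, hx2⟩
              exact ⟨Or.inr hx, fun hxv => hvnF (hxv ▸ hx), hx2⟩
          rw [hu, hi]
        rw [hfp, hf]
        dsimp only
        rw [hWeq, if_neg h]
        have hvq : v (insert (v p) p.1, p.2.erase (v p)) = v p := by
          rw [hv]; dsimp only; rw [hWeq]
        rw [hvq]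
        have : v p ∈ insert (v p) p.1 := Finset.mem_insert_self _ _
        rw [if_pos this]
        rw [Finset.erase_insert hvA, Finset.insert_erase hvB]
  -- fixed points characterization
  have hfix : ∀ p ∈ DP P T n, (f p = p ↔ p.1.filter T = p.2) := by
    intro p hp
    constructor
    · intro hfp
      by_contra hne
      have hWne : W p ≠ ∅ := by
        intro hempty
        rw [hW] at hempty
        exact hne (union_sdiff_inter_eq_empty_iff.1 hempty)
      obtain ⟨⟨hvpos, hvT⟩, hcases⟩ := hTv p hp hWne
      rw [hf] at hfp
      dsimp only at hfp
      rw [if_neg hWne] at hfp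
      rcases hcases with ⟨hvA, hvB⟩ | ⟨hvA, hvB⟩
      · rw [if_pos hvA] at hfp
        have := congrArg Prod.fst hfp
        dsimp only at this
        rw [Finset.erase_eq_self] at this
        exact this hvA
      · rw [if_neg hvA] at hfp
        have := congrArg Prod.fst hfp
        dsimp only at this
        rw [Finset.insert_eq_self] at this
        exact hvA this
    · intro heq
      rw [hf]
      dsimp only
      rw [if_pos]
      rw [hW]
      dsimp only
      exact union_sdiff_inter_eq_empty_iff.2 heq
  have hpar := card_modEq_fixed ((DP P T n).card) (DP P T n) f le_rfl hmaps hinv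
  rw [hpar]
  congr 1
  -- bijection between fixed points and the target
  refine Finset.card_bij' (fun p _ => (p.1.filter (fun x => ¬ T x), dbl p.2))
    (fun q _ => (q.1 ∪ hlf q.2, hlf q.2)) ?_ ?_ ?_ ?_
  · intro p hp
    obtain ⟨hp, hfp⟩ := Finset.mem_filter.1 hp
    obtain ⟨hg1, hg2, hsum⟩ := mem_DP.1 hp
    have hB : p.1.filter T = p.2 := (hfix p hp).1 hfp
    refine mem_DP.2 ⟨?_, ?_, ?_⟩
    · intro x hx
      have := Finset.mem_filter.1 hx
      exact ⟨(hg1 x this.1).1, (hg1 x this.1).2, this.2⟩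
    · intro x hx
      obtain ⟨y, hy, rfl⟩ := Finset.mem_image.1 hx
      exact ⟨by have := (hg2 y hy).1; omega, (hT2 _).2 ⟨y, (hg2 y hy).2, rfl⟩⟩
    · have e1 := Finset.sum_filter_add_sum_filter_not p.1 T (fun x => x)
      have e2 : ∑ x ∈ p.1.filter (fun x => T x), x = ∑ x ∈ p.2, x :=
        congrArg (fun s : Finset ℕ => ∑ x ∈ s, x) hB
      have e3 := sum_dbl p.2
      dsimp only
      simp only [sum_id_eq, id_eq] at e1 e2 e3 hsum ⊢
      omega
  · intro q hq
    obtain ⟨hg1, hg2, hsum⟩ := mem_DP.1 hq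
    have hhlf : ∀ x ∈ hlf q.2, 0 < x ∧ T x := by
      intro x hx
      obtain ⟨y, hy, rfl⟩ := Finset.mem_image.1 hx
      obtain ⟨z, hz, rfl⟩ := (hT2 y).1 (hg2 y hy).2
      have h0 : 0 < z := by have := (hg2 _ hy).1; omega
      have hzz : 2*z/2 = z := by omega
      rw [hzz]
      exact ⟨h0, hz⟩
    have hdisj : Disjoint q.1 (hlf q.2) := by
      rw [Finset.disjoint_left]
      intro x hx1 hx2
      exact (hg1 x hx1).2.2 ((hhlf x hx2).2)
    have heven : ∀ x ∈ q.2, 2 ∣ x := by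
      intro x hx
      obtain ⟨z, hz, rfl⟩ := (hT2 x).1 (hg2 x hx).2
      omega
    have hsum2 : 2 * (hlf q.2).sum id = q.2.sum id := by
      conv_rhs => rw [← dbl_hlf heven]
      rw [sum_dbl]
    refine Finset.mem_filter.2 ⟨mem_DP.2 ⟨?_, ?_, ?_⟩, ?_⟩
    · intro x hx
      rcases Finset.mem_union.1 hx with hx | hx
      · exact ⟨(hg1 x hx).1, (hg1 x hx).2.1⟩
      · exact ⟨(hhlf x hx).1, hsub _ (hhlf x hx).2⟩
    · exact hhlf
    · dsimp only
      rw [Finset.sum_union hdisj]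
      simp only [sum_id_eq, id_eq] at hsum2 hsum ⊢
      omega
    · apply (hfix _ (mem_DP.2 ⟨?_, ?_, ?_⟩)).2
      · dsimp only
        ext x
        simp only [Finset.mem_filter, Finset.mem_union]
        constructor
        · rintro ⟨hx | hx, hT'⟩
          · exact absurd hT' (hg1 x hx).2.2
          · exact hx
        · intro hx
          exact ⟨Or.inr hx, (hhlf x hx).2⟩
      · intro x hx
        rcases Finset.mem_union.1 hx with hx | hx
        · exact ⟨(hg1 x hx).1, (hg1 x hx).2.1⟩
        · exact ⟨(hhlf x hx).1, hsub _ (hhlf x hx).2⟩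
      · exact hhlf
      · dsimp only
        rw [Finset.sum_union hdisj]
        simp only [sum_id_eq, id_eq] at hsum2 hsum ⊢
        omega
  · intro p hp
    obtain ⟨hp, hfp⟩ := Finset.mem_filter.1 hp
    obtain ⟨hg1, hg2, hsum⟩ := mem_DP.1 hp
    have hB : p.1.filter T = p.2 := (hfix p hp).1 hfp
    dsimp only
    rw [hlf_dbl]
    have : p.1.filter (fun x => ¬ T x) ∪ p.2 = p.1 := by
      conv_lhs => rw [← hB]
      rw [Finset.union_comm, Finset.filter_union_filter_not_eq]
    rw [this]
  · intro q hq
    obtain ⟨hg1, hg2, hsum⟩ := mem_DP.1 hq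
    have heven : ∀ x ∈ q.2, 2 ∣ x := by
      intro x hx
      obtain ⟨z, hz, rfl⟩ := (hT2 x).1 (hg2 x hx).2
      omega
    have hhlfT : ∀ x ∈ hlf q.2, T x := by
      intro x hx
      obtain ⟨y, hy, rfl⟩ := Finset.mem_image.1 hx
      obtain ⟨z, hz, rfl⟩ := (hT2 y).1 (hg2 y hy).2
      have hzz : 2*z/2 = z := by omega
      rw [hzz]
      exact hz
    dsimp only
    rw [dbl_hlf heven]
    have : (q.1 ∪ hlf q.2).filter (fun x => ¬ T x) = q.1 := by
      ext x
      simp only [Finset.mem_filter, Finset.mem_union]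
      constructor
      · rintro ⟨hx | hx, hT'⟩
        · exact hx
        · exact absurd (hhlfT x hx) hT'
      · intro hx
        exact ⟨Or.inl hx, (hg1 x hx).2.2⟩
    rw [this]

/-- merging two disjoint components -/
lemma merge (P T : ℕ → Prop) (hdisj : ∀ x, P x → T x → False) (n : ℕ) :
    (DP P T n).card = (DS (fun x => P x ∨ T x) n).card := by
  refine Finset.card_bij' (fun p _ => p.1 ∪ p.2) (fun A _ => (A.filter P, A.filter T))
    ?_ ?_ ?_ ?_
  · intro p hp
    obtain ⟨hg1, hg2, hsum⟩ := mem_DP.1 hp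
    have hdisj' : Disjoint p.1 p.2 := by
      rw [Finset.disjoint_left]
      intro x hx1 hx2
      exact hdisj x (hg1 x hx1).2 (hg2 x hx2).2
    refine mem_DS.2 ⟨?_, ?_⟩
    · intro x hx
      rcases Finset.mem_union.1 hx with h | h
      · exact ⟨(hg1 x h).1, Or.inl (hg1 x h).2⟩
      · exact ⟨(hg2 x h).1, Or.inr (hg2 x h).2⟩
    · rw [Finset.sum_union hdisj', hsum]
  · intro A hA
    obtain ⟨hg, hsum⟩ := mem_DS.1 hA
    refine mem_DP.2 ⟨?_, ?_, ?_⟩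
    · intro x hx
      have := Finset.mem_filter.1 hx
      exact ⟨(hg x this.1).1, this.2⟩
    · intro x hx
      have := Finset.mem_filter.1 hx
      exact ⟨(hg x this.1).1, this.2⟩
    · have hTP : A.filter T = A.filter (fun x => ¬ P x) := by
        apply Finset.filter_congr
        intro x hx
        have hx2 := hg x hx
        constructor
        · intro ht hp
          exact hdisj x hp ht
        · intro hnp
          rcases hx2.2 with h | h
          · exact absurd h hnp
          · exact h
      dsimp only
      rw [hTP, Finset.sum_filter_add_sum_filter_not, hsum]
  · intro p hp
    obtain ⟨hg1, hg2, hsum⟩ := mem_DP.1 hp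
    have e1 : (p.1 ∪ p.2).filter P = p.1 := by
      ext x
      simp only [Finset.mem_filter, Finset.mem_union]
      constructor
      · rintro ⟨h | h, hP⟩
        · exact h
        · exact absurd hP (fun hp' => hdisj x hp' (hg2 x h).2)
      · intro h
        exact ⟨Or.inl h, (hg1 x h).2⟩
    have e2 : (p.1 ∪ p.2).filter T = p.2 := by
      ext x
      simp only [Finset.mem_filter, Finset.mem_union]
      constructor
      · rintro ⟨h | h, hT⟩
        · exact absurd hT (fun ht' => hdisj x (hg1 x h).2 ht')
        · exact h
      · intro h
        exact ⟨Or.inr h, (hg2 x h).2⟩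
    exact Prod.ext e1 e2
  · intro A hA
    obtain ⟨hg, hsum⟩ := mem_DS.1 hA
    ext x
    simp only [Finset.mem_union, Finset.mem_filter]
    constructor
    · rintro (⟨h, _⟩ | ⟨h, _⟩) <;> exact h
    · intro h
      rcases (hg x h).2 with h' | h'
      · exact Or.inl ⟨h, h'⟩
      · exact Or.inr ⟨h, h'⟩

lemma good_congr {P P' : ℕ → Prop} (h : ∀ x, 0 < x → (P x ↔ P' x)) {A : Finset ℕ} :
    good P A ↔ good P' A := by
  constructor <;> intro hg x hx
  · exact ⟨(hg x hx).1, (h x (hg x hx).1).1 (hg x hx).2⟩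
  · exact ⟨(hg x hx).1, (h x (hg x hx).1).2 (hg x hx).2⟩

lemma DS_congr {P P' : ℕ → Prop} (h : ∀ x, 0 < x → (P x ↔ P' x)) (n : ℕ) :
    DS P n = DS P' n := by
  ext A
  rw [mem_DS, mem_DS, good_congr h]

/-! ### Franklin's involution -/

def maxD (S : Finset ℕ) : ℕ := S.max.getD 0
def minD (S : Finset ℕ) : ℕ := S.min.getD 0
def gapD (S : Finset ℕ) : ℕ := ((Finset.range (maxD S + 1)).filter (fun m => m ∉ S)).max.getD 0

def moveA (S : Finset ℕ) : Finset ℕ :=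
  insert (maxD S + 1) ((S.erase (minD S)).erase (maxD S - minD S + 1))

def moveB (S : Finset ℕ) : Finset ℕ :=
  insert (maxD S - gapD S) (insert (gapD S) (S.erase (maxD S)))

def franklin (S : Finset ℕ) : Finset ℕ :=
  if S = ∅ then S else
  if minD S ≤ maxD S - gapD S then
    (if maxD S = 2 * minD S - 1 then S else moveA S)
  else
    (if maxD S = 2 * (maxD S - gapD S) then S else moveB S)

lemma maxD_eq_max' {S : Finset ℕ} (h : S.Nonempty) : maxD S = S.max' h := by
  rw [maxD, ← Finset.coe_max' h]; rfl

lemma minD_eq_min' {S : Finset ℕ} (h : S.Nonempty) : minD S = S.min' h := by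
  rw [minD, ← Finset.coe_min' h]; rfl

lemma maxD_mem {S : Finset ℕ} (hne : S ≠ ∅) : maxD S ∈ S := by
  have h := Finset.nonempty_iff_ne_empty.2 hne
  rw [maxD_eq_max' h]; exact Finset.max'_mem _ _

lemma le_maxD {S : Finset ℕ} {x : ℕ} (hx : x ∈ S) : x ≤ maxD S := by
  have h : S.Nonempty := ⟨x, hx⟩
  rw [maxD_eq_max' h]; exact Finset.le_max' _ _ hx

lemma minD_mem {S : Finset ℕ} (hne : S ≠ ∅) : minD S ∈ S := by
  have h := Finset.nonempty_iff_ne_empty.2 hne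
  rw [minD_eq_min' h]; exact Finset.min'_mem _ _

lemma minD_le {S : Finset ℕ} {x : ℕ} (hx : x ∈ S) : minD S ≤ x := by
  have h : S.Nonempty := ⟨x, hx⟩
  rw [minD_eq_min' h]; exact Finset.min'_le _ _ hx

lemma maxD_eq {S : Finset ℕ} {a : ℕ} (ha : a ∈ S) (h : ∀ x ∈ S, x ≤ a) : maxD S = a :=
  le_antisymm (by
    have hne : S.Nonempty := ⟨a, ha⟩
    rw [maxD_eq_max' hne]
    exact Finset.max'_le _ _ _ h) (le_maxD ha)

lemma minD_eq {S : Finset ℕ} {a : ℕ} (ha : a ∈ S) (h : ∀ x ∈ S, a ≤ x) : minD S = a :=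
  le_antisymm (minD_le ha) (by
    have hne : S.Nonempty := ⟨a, ha⟩
    rw [minD_eq_min' hne]
    exact Finset.le_min' _ _ _ h)

lemma gapD_spec {S : Finset ℕ} (hne : S ≠ ∅) (h0 : 0 ∉ S) :
    gapD S ∉ S ∧ gapD S < maxD S ∧ ∀ m, gapD S < m → m ≤ maxD S → m ∈ S := by
  set G := (Finset.range (maxD S + 1)).filter (fun m => m ∉ S) with hG
  have hGne : G.Nonempty := by
    refine ⟨0, Finset.mem_filter.2 ⟨Finset.mem_range.2 (by omega), h0⟩⟩
  have hgap : gapD S = G.max' hGne := by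
    rw [gapD, ← hG, ← Finset.coe_max' hGne]; rfl
  have hmem : gapD S ∈ G := by rw [hgap]; exact Finset.max'_mem _ _
  obtain ⟨hrange, hnotS⟩ := Finset.mem_filter.1 hmem
  have hle : gapD S ≤ maxD S := by have := Finset.mem_range.1 hrange; omega
  have hlt : gapD S < maxD S := by
    rcases Nat.lt_or_ge (gapD S) (maxD S) with h | h
    · exact h
    · exact absurd (by have : gapD S = maxD S := by omega
                       rw [this]; exact maxD_mem hne) hnotS
  refine ⟨hnotS, hlt, ?_⟩
  intro m hm hmle
  by_contra hmS
  have : m ∈ G := Finset.mem_filter.2 ⟨Finset.mem_range.2 (by omega), hmS⟩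
  have : m ≤ gapD S := by rw [hgap]; exact Finset.le_max' _ _ this
  omega

lemma gapD_le {S : Finset ℕ} {a : ℕ}
    (hrun : ∀ m, a < m → m ≤ maxD S → m ∈ S) : gapD S ≤ a := by
  set G := (Finset.range (maxD S + 1)).filter (fun m => m ∉ S) with hG
  rcases Finset.eq_empty_or_nonempty G with h | h
  · rw [gapD, ← hG, h]
    exact Nat.zero_le a
  · have hgap : gapD S = G.max' h := by
      rw [gapD, ← hG, ← Finset.coe_max' h]; rfl
    rw [hgap]
    apply Finset.max'_le
    intro y hy
    obtain ⟨hyr, hyS⟩ := Finset.mem_filter.1 hy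
    by_contra hya
    exact hyS (hrun y (by omega) (by have := Finset.mem_range.1 hyr; omega))

lemma gapD_eq {S : Finset ℕ} (hne : S ≠ ∅) (h0 : 0 ∉ S) {a : ℕ} (ha : a ∉ S)
    (hle : a ≤ maxD S) (hrun : ∀ m, a < m → m ≤ maxD S → m ∈ S) : gapD S = a := by
  refine le_antisymm (gapD_le hrun) ?_
  set G := (Finset.range (maxD S + 1)).filter (fun m => m ∉ S) with hG
  have haG : a ∈ G := Finset.mem_filter.2 ⟨Finset.mem_range.2 (by omega), ha⟩
  have hGne : G.Nonempty := ⟨a, haG⟩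
  have hgap : gapD S = G.max' hGne := by
    rw [gapD, ← hG, ← Finset.coe_max' hGne]; rfl
  rw [hgap]
  exact Finset.le_max' _ _ haG

/-- All the structural facts for a (non-exceptional) A-move. -/
lemma A_pack {S : Finset ℕ} (h0 : 0 ∉ S) (hne : S ≠ ∅)
    (hcase : minD S ≤ maxD S - gapD S) (hexc : maxD S ≠ 2 * minD S - 1) :
    franklin S = moveA S ∧ franklin (moveA S) = S ∧
    (moveA S).sum id = S.sum id ∧ 0 ∉ moveA S ∧ maxD S + 1 ∈ moveA S ∧ maxD S + 1 ∉ S := by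
  set s := minD S with hs
  set L := maxD S with hL
  set k := gapD S with hk
  obtain ⟨hkS, hkL, hrun⟩ := gapD_spec hne h0
  have hsS : s ∈ S := minD_mem hne
  have hLS : L ∈ S := maxD_mem hne
  have hs1 : 1 ≤ s := by
    rcases Nat.eq_zero_or_pos s with h | h
    · exact absurd (h ▸ hsS) h0
    · exact h
  have hsL : s ≤ L := le_maxD hsS
  have hks : s ≤ k + 1 := minD_le (hrun (k+1) (by omega) (by omega))
  -- L ≥ 2s
  have hL2s : 2 * s ≤ L := by
    have ht : s ≤ L - k := hcase
    omega
  have hmem1 : L - s + 1 ∈ S := by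
    refine hrun _ ?_ (by omega)
    omega
  have hLp1 : L + 1 ∉ S := fun h => by have := le_maxD h; omega
  have hmemA : ∀ x, x ∈ moveA S ↔ (x = L + 1 ∨ (x ∈ S ∧ x ≠ s ∧ x ≠ L - s + 1)) := by
    intro x
    simp only [moveA, Finset.mem_insert, Finset.mem_erase, ← hs, ← hL]
    constructor
    · rintro (h | ⟨h1, h2, h3⟩)
      · exact Or.inl h
      · exact Or.inr ⟨h3, h2, h1⟩
    · rintro (h | ⟨h1, h2, h3⟩)
      · exact Or.inl h
      · exact Or.inr ⟨h3, h2, h1⟩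
  have hfr : franklin S = moveA S := by
    rw [franklin, if_neg hne, if_pos hcase, if_neg hexc]
  -- sums
  have hsum : (moveA S).sum id = S.sum id := by
    have e0 : L - s + 1 ∈ S.erase s := Finset.mem_erase.2 ⟨by omega, hmem1⟩
    have e1 := Finset.sum_erase_add S id hsS
    have e2 := Finset.sum_erase_add (S.erase s) id e0
    have e3 : L + 1 ∉ (S.erase s).erase (L - s + 1) := by
      intro h
      exact hLp1 (Finset.mem_of_mem_erase (Finset.mem_of_mem_erase h))
    have e4 := Finset.sum_insert (f := id) e3
    rw [moveA]
    simp only [sum_id_eq, id_eq, ← hs, ← hL] at e1 e2 e4 ⊢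
    omega
  have h0' : 0 ∉ moveA S := by
    rw [hmemA]
    rintro (h | ⟨h1, _, _⟩)
    · omega
    · exact h0 h1
  have hne' : moveA S ≠ ∅ := by
    intro h
    have : L + 1 ∈ moveA S := (hmemA _).2 (Or.inl rfl)
    rw [h] at this
    exact absurd this (Finset.notMem_empty _)
  -- structure of moveA S
  have hmax' : maxD (moveA S) = L + 1 := by
    apply maxD_eq ((hmemA _).2 (Or.inl rfl))
    intro x hx
    rcases (hmemA x).1 hx with h | ⟨h, _, _⟩
    · omega
    · have := le_maxD h; omega
  have hmin' : s + 1 ≤ minD (moveA S) := by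
    have := minD_mem hne'
    rcases (hmemA _).1 this with h | ⟨h, hne1, _⟩
    · omega
    · have := minD_le (S := S) h; omega
  have hgap' : gapD (moveA S) = L - s + 1 := by
    refine gapD_eq hne' h0' ?_ (by omega) ?_
    · rw [hmemA]
      rintro (h | ⟨_, _, h3⟩)
      · omega
      · exact h3 rfl
    · intro m hm hmle
      rw [hmax'] at hmle
      rcases Nat.eq_or_lt_of_le hmle with h | h
      · exact (hmemA m).2 (Or.inl h)
      · refine (hmemA m).2 (Or.inr ⟨hrun m (by omega) (by omega), by omega, by omega⟩)
  -- the B-branch applies to moveA S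
  have hcase' : ¬ (minD (moveA S) ≤ maxD (moveA S) - gapD (moveA S)) := by
    rw [hmax', hgap']
    omega
  have hexc' : maxD (moveA S) ≠ 2 * (maxD (moveA S) - gapD (moveA S)) := by
    rw [hmax', hgap']
    omega
  have hback : franklin (moveA S) = S := by
    rw [franklin, if_neg hne', if_neg hcase', if_neg hexc', moveB, hmax', hgap']
    have ht' : L + 1 - (L - s + 1) = s := by omega
    rw [ht']
    have he1 : (moveA S).erase (L + 1) = (S.erase s).erase (L - s + 1) := by
      rw [moveA, ← hs, ← hL]
      apply Finset.erase_insert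
      intro h
      exact hLp1 (Finset.mem_of_mem_erase (Finset.mem_of_mem_erase h))
    rw [he1]
    have he2 : insert (L - s + 1) ((S.erase s).erase (L - s + 1)) = S.erase s :=
      Finset.insert_erase (Finset.mem_erase.2 ⟨by omega, hmem1⟩)
    rw [he2, Finset.insert_erase hsS]
  exact ⟨hfr, hback, hsum, h0', (hmemA _).2 (Or.inl rfl), hLp1⟩

/-- All the structural facts for a (non-exceptional) B-move. -/
lemma B_pack {S : Finset ℕ} (h0 : 0 ∉ S) (hne : S ≠ ∅)
    (hcase : ¬ (minD S ≤ maxD S - gapD S)) (hexc : maxD S ≠ 2 * (maxD S - gapD S)) :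
    franklin S = moveB S ∧ franklin (moveB S) = S ∧
    (moveB S).sum id = S.sum id ∧ 0 ∉ moveB S ∧
    (maxD S - gapD S) ∈ moveB S ∧ (maxD S - gapD S) ∉ S := by
  set s := minD S with hs
  set L := maxD S with hL
  set k := gapD S with hk
  set t := L - k with ht
  obtain ⟨hkS, hkL, hrun⟩ := gapD_spec hne h0
  have hsS : s ∈ S := minD_mem hne
  have hLS : L ∈ S := maxD_mem hne
  have hs1 : 1 ≤ s := by
    rcases Nat.eq_zero_or_pos s with h | h
    · exact absurd (h ▸ hsS) h0
    · exact h
  have hsL : s ≤ L := le_maxD hsS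
  have hks : s ≤ k + 1 := minD_le (hrun (k+1) (by omega) (by omega))
  have hts : t < s := by omega
  have ht1 : 1 ≤ t := by omega
  -- k > t, i.e. L > 2t
  have hkt : t < k := by
    rcases Nat.lt_or_ge t k with h | h
    · exact h
    · exfalso
      have : k = t := by omega
      omega
  have htS : t ∉ S := fun h => by have := minD_le h; omega
  have hmemB : ∀ x, x ∈ moveB S ↔ (x = t ∨ x = k ∨ (x ∈ S ∧ x ≠ L)) := by
    intro x
    simp only [moveB, Finset.mem_insert, Finset.mem_erase, ← hk, ← hL, ← ht]
    constructor
    · rintro (h | h | ⟨h1, h2⟩)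
      · exact Or.inl h
      · exact Or.inr (Or.inl h)
      · exact Or.inr (Or.inr ⟨h2, h1⟩)
    · rintro (h | h | ⟨h1, h2⟩)
      · exact Or.inl h
      · exact Or.inr (Or.inl h)
      · exact Or.inr (Or.inr ⟨h2, h1⟩)
  have hfr : franklin S = moveB S := by
    rw [franklin, if_neg hne, if_neg hcase, if_neg hexc]
  have hsum : (moveB S).sum id = S.sum id := by
    have e1 := Finset.sum_erase_add S id hLS
    have e2 : k ∉ S.erase L := fun h => hkS (Finset.mem_of_mem_erase h)
    have e3 := Finset.sum_insert (f := id) e2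
    have e4 : t ∉ insert k (S.erase L) := by
      rw [Finset.mem_insert]
      rintro (h | h)
      · omega
      · exact htS (Finset.mem_of_mem_erase h)
    have e5 := Finset.sum_insert (f := id) e4
    rw [moveB, ← hk, ← hL, ← ht]
    simp only [sum_id_eq, id_eq] at e1 e3 e5 ⊢
    omega
  have h0' : 0 ∉ moveB S := by
    rw [hmemB]
    rintro (h | h | ⟨h1, _⟩)
    · omega
    · omega
    · exact h0 h1
  have hne' : moveB S ≠ ∅ := by
    intro h
    have : t ∈ moveB S := (hmemB _).2 (Or.inl rfl)
    rw [h] at this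
    exact absurd this (Finset.notMem_empty _)
  have hmax' : maxD (moveB S) = L - 1 := by
    apply maxD_eq
    · rcases Nat.eq_or_lt_of_le ht1 with h1 | h1
      · exact (hmemB _).2 (Or.inr (Or.inl (by omega)))
      · refine (hmemB _).2 (Or.inr (Or.inr ⟨hrun (L-1) (by omega) (by omega), by omega⟩))
    · intro x hx
      rcases (hmemB x).1 hx with h | h | ⟨h1, h2⟩
      · omega
      · omega
      · have := le_maxD h1; omega
  have hmin' : minD (moveB S) = t := by
    apply minD_eq ((hmemB _).2 (Or.inl rfl))
    intro x hx
    rcases (hmemB x).1 hx with h | h | ⟨h1, _⟩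
    · omega
    · omega
    · have := minD_le h1; omega
  have hgap' : gapD (moveB S) ≤ k - 1 := by
    apply gapD_le
    intro m hm hmle
    rw [hmax'] at hmle
    rcases Nat.eq_or_lt_of_le (show k ≤ m by omega) with h | h
    · exact (hmemB m).2 (Or.inr (Or.inl h.symm))
    · exact (hmemB m).2 (Or.inr (Or.inr ⟨hrun m (by omega) (by omega), by omega⟩))
  have hcase' : minD (moveB S) ≤ maxD (moveB S) - gapD (moveB S) := by
    rw [hmax', hmin']
    omega
  have hexc' : maxD (moveB S) ≠ 2 * minD (moveB S) - 1 := by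
    rw [hmax', hmin']
    omega
  have hback : franklin (moveB S) = S := by
    rw [franklin, if_neg hne', if_pos hcase', if_neg hexc', moveA, hmax', hmin']
    have ht2 : L - 1 + 1 = L := by omega
    have ht3 : L - 1 - t + 1 = k := by omega
    rw [ht2, ht3]
    have he1 : (moveB S).erase t = insert k (S.erase L) := by
      rw [moveB, ← hk, ← hL, ← ht]
      apply Finset.erase_insert
      rw [Finset.mem_insert]
      rintro (h | h)
      · omega
      · exact htS (Finset.mem_of_mem_erase h)
    rw [he1]
    have he2 : (insert k (S.erase L)).erase k = S.erase L := by
      apply Finset.erase_insert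
      intro h
      exact hkS (Finset.mem_of_mem_erase h)
    rw [he2, Finset.insert_erase hLS]
  refine ⟨hfr, hback, hsum, h0', (hmemB _).2 (Or.inl rfl), ?_⟩
  exact htS

lemma franklin_cases {S : Finset ℕ} (h0 : 0 ∉ S) :
    (franklin S = S ∧ (S = ∅ ∨
      (S ≠ ∅ ∧ minD S ≤ maxD S - gapD S ∧ maxD S = 2 * minD S - 1) ∨
      (S ≠ ∅ ∧ ¬ (minD S ≤ maxD S - gapD S) ∧ maxD S = 2 * (maxD S - gapD S)))) ∨
    (franklin S ≠ S ∧ franklin (franklin S) = S ∧ (franklin S).sum id = S.sum id ∧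
      0 ∉ franklin S) := by
  by_cases hne : S = ∅
  · left
    refine ⟨by rw [franklin, if_pos hne], Or.inl hne⟩
  by_cases hcase : minD S ≤ maxD S - gapD S
  · by_cases hexc : maxD S = 2 * minD S - 1
    · left
      refine ⟨by rw [franklin, if_neg hne, if_pos hcase, if_pos hexc], Or.inr (Or.inl ⟨hne, hcase, hexc⟩)⟩
    · right
      obtain ⟨hfr, hback, hsum, h0', hmem, hnmem⟩ := A_pack h0 hne hcase hexc
      refine ⟨?_, ?_, ?_, ?_⟩
      · rw [hfr]
        intro h
        rw [h] at hmem
        exact hnmem hmem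
      · rw [hfr]; exact hback
      · rw [hfr]; exact hsum
      · rw [hfr]; exact h0'
  · by_cases hexc : maxD S = 2 * (maxD S - gapD S)
    · left
      refine ⟨by rw [franklin, if_neg hne, if_neg hcase, if_pos hexc], Or.inr (Or.inr ⟨hne, hcase, hexc⟩)⟩
    · right
      obtain ⟨hfr, hback, hsum, h0', hmem, hnmem⟩ := B_pack h0 hne hcase hexc
      refine ⟨?_, ?_, ?_, ?_⟩
      · rw [hfr]
        intro h
        rw [h] at hmem
        exact hnmem hmem
      · rw [hfr]; exact hback
      · rw [hfr]; exact hsum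
      · rw [hfr]; exact h0'

lemma franklin_nz {S : Finset ℕ} (h0 : 0 ∉ S) : 0 ∉ franklin S := by
  rcases franklin_cases h0 with ⟨h, _⟩ | ⟨_, _, _, h⟩
  · rw [h]; exact h0
  · exact h

lemma franklin_sum {S : Finset ℕ} (h0 : 0 ∉ S) : (franklin S).sum id = S.sum id := by
  rcases franklin_cases h0 with ⟨h, _⟩ | ⟨_, _, h, _⟩
  · rw [h]
  · exact h

lemma franklin_invol {S : Finset ℕ} (h0 : 0 ∉ S) : franklin (franklin S) = S := by
  rcases franklin_cases h0 with ⟨h, _⟩ | ⟨_, h, _, _⟩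
  · rw [h, h]
  · exact h

def stair (k : ℤ) : Finset ℕ :=
  if 0 ≤ k then Finset.Ico k.toNat (2*k.toNat) else Finset.Icc ((-k).toNat + 1) (2*(-k).toNat)

lemma stair_nz (k : ℤ) : 0 ∉ stair k := by
  unfold stair
  split <;> intro h
  · rename_i hk
    rw [Finset.mem_Ico] at h
    omega
  · rw [Finset.mem_Icc] at h
    omega

lemma stair_zero : stair 0 = ∅ := by
  rw [stair, if_pos le_rfl]
  simp

lemma franklin_stair (k : ℤ) : franklin (stair k) = stair k := by
  rcases lt_trichotomy k 0 with hk | hk | hk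
  · have hneg : ¬ 0 ≤ k := by omega
    set m := (-k).toNat with hm
    have hm1 : 1 ≤ m := by omega
    have hS : stair k = Finset.Icc (m+1) (2*m) := by rw [stair, if_neg hneg]
    have hmm : m + 1 ∈ stair k := by rw [hS]; exact Finset.mem_Icc.2 ⟨le_rfl, by omega⟩
    have hne : stair k ≠ ∅ := by
      intro h
      rw [h] at hmm
      exact absurd hmm (Finset.notMem_empty _)
    have h0 : 0 ∉ stair k := stair_nz k
    have hmax : maxD (stair k) = 2*m := by
      apply maxD_eq
      · rw [hS]; exact Finset.mem_Icc.2 ⟨by omega, le_rfl⟩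
      · intro x hx; rw [hS] at hx; exact (Finset.mem_Icc.1 hx).2
    have hmin : minD (stair k) = m+1 := by
      apply minD_eq hmm
      intro x hx; rw [hS] at hx; exact (Finset.mem_Icc.1 hx).1
    have hgap : gapD (stair k) = m := by
      refine gapD_eq hne h0 ?_ (by rw [hmax]; omega) ?_
      · rw [hS]
        intro h
        have := (Finset.mem_Icc.1 h).1
        omega
      · intro x hx hxle
        rw [hmax] at hxle
        rw [hS]
        exact Finset.mem_Icc.2 ⟨by omega, hxle⟩
    rw [franklin, if_neg hne, hmax, hmin, hgap]
    rw [if_neg (by omega), if_pos (by omega)]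
  · subst hk
    rw [stair_zero, franklin, if_pos rfl]
  · have hpos : 0 ≤ k := by omega
    set m := k.toNat with hm
    have hm1 : 1 ≤ m := by omega
    have hS : stair k = Finset.Ico m (2*m) := by rw [stair, if_pos hpos]
    have hmm : m ∈ stair k := by rw [hS]; exact Finset.mem_Ico.2 ⟨le_rfl, by omega⟩
    have hne : stair k ≠ ∅ := by
      intro h
      rw [h] at hmm
      exact absurd hmm (Finset.notMem_empty _)
    have h0 : 0 ∉ stair k := stair_nz k
    have hmax : maxD (stair k) = 2*m-1 := by
      apply maxD_eq
      · rw [hS]; exact Finset.mem_Ico.2 ⟨by omega, by omega⟩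
      · intro x hx; rw [hS] at hx; have := (Finset.mem_Ico.1 hx).2; omega
    have hmin : minD (stair k) = m := by
      apply minD_eq hmm
      intro x hx; rw [hS] at hx; exact (Finset.mem_Ico.1 hx).1
    have hgap : gapD (stair k) = m-1 := by
      refine gapD_eq hne h0 ?_ (by rw [hmax]; omega) ?_
      · rw [hS]
        intro h
        have := (Finset.mem_Ico.1 h).1
        omega
      · intro x hx hxle
        rw [hmax] at hxle
        rw [hS]
        exact Finset.mem_Ico.2 ⟨by omega, by omega⟩
    rw [franklin, if_neg hne, hmax, hmin, hgap]
    rw [if_pos (by omega), if_pos (by omega)]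

lemma franklin_fix {S : Finset ℕ} (h0 : 0 ∉ S) (h : franklin S = S) : ∃ k : ℤ, S = stair k := by
  rcases franklin_cases h0 with ⟨_, hcase⟩ | ⟨hne, _⟩
  swap
  · exact absurd h hne
  rcases hcase with hemp | ⟨hne, hcase, hexc⟩ | ⟨hne, hcase, hexc⟩
  · exact ⟨0, by rw [stair_zero]; exact hemp⟩
  · -- A exception : S = Ico s (2s)
    obtain ⟨hkS, hkL, hrun⟩ := gapD_spec hne h0
    set s := minD S with hs
    set L := maxD S with hL
    set k := gapD S with hk
    have hsS : s ∈ S := minD_mem hne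
    have hs1 : 1 ≤ s := by
      rcases Nat.eq_zero_or_pos s with h' | h'
      · exact absurd (h' ▸ hsS) h0
      · exact h'
    have hsL : s ≤ L := le_maxD hsS
    refine ⟨(s : ℤ), ?_⟩
    have h2 : stair (s : ℤ) = Finset.Ico s (2*s) := by
      rw [stair, if_pos (by positivity)]
      congr 1 <;> simp
    rw [h2]
    ext x
    rw [Finset.mem_Ico]
    constructor
    · intro hx
      have h3 := minD_le hx
      have h4 := le_maxD hx
      omega
    · intro hx
      refine hrun x (by omega) (by omega)
  · -- B exception : S = Icc (t+1) (2t)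
    obtain ⟨hkS, hkL, hrun⟩ := gapD_spec hne h0
    set s := minD S with hs
    set L := maxD S with hL
    set k := gapD S with hk
    have hsS : s ∈ S := minD_mem hne
    have hsL : s ≤ L := le_maxD hsS
    set t := L - k with ht
    have ht1 : 1 ≤ t := by omega
    refine ⟨-(t : ℤ), ?_⟩
    have h2 : stair (-(t:ℤ)) = Finset.Icc (t+1) (2*t) := by
      rw [stair, if_neg (by omega)]
      congr 1 <;> simp
    rw [h2]
    ext x
    rw [Finset.mem_Icc]
    constructor
    · intro hx
      have h3 := minD_le hx
      have h4 := le_maxD hx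
      omega
    · intro hx
      refine hrun x (by omega) (by omega)

lemma sum_Ico_gauss (a b : ℕ) (h : a ≤ b) :
    2 * (Finset.Ico a b).sum id + a*a + b = b*b + a := by
  have h3 : (Finset.Ico 0 a).sum id + (Finset.Ico a b).sum id = (Finset.Ico 0 b).sum id :=
    Finset.sum_Ico_consecutive id (Nat.zero_le a) h
  have h1 := Finset.sum_range_id_mul_two b
  have h2 := Finset.sum_range_id_mul_two a
  have e1 : (Finset.Ico 0 b).sum id = ∑ i ∈ Finset.range b, i := by
    rw [← Finset.range_eq_Ico]; rfl
  have e2 : (Finset.Ico 0 a).sum id = ∑ i ∈ Finset.range a, i := by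
    rw [← Finset.range_eq_Ico]; rfl
  have q1 : b*(b-1) + b = b*b := by
    rcases b with _ | n
    · simp
    · simp only [Nat.succ_sub_one]; ring
  have q2 : a*(a-1) + a = a*a := by
    rcases a with _ | n
    · simp
    · simp only [Nat.succ_sub_one]; ring
  omega

lemma sum_stair (k : ℤ) : (2 * (stair k).sum id : ℤ) = 3*k^2 - k := by
  unfold stair
  split
  · rename_i hk
    set m := k.toNat with hm
    have hmk : (m : ℤ) = k := Int.toNat_of_nonneg hk
    have hg := sum_Ico_gauss m (2*m) (by omega)
    -- 2*S + m*m + 2*m = 4*m*m + m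
    zify at hg
    push_cast
    nlinarith [hg, hmk]
  · rename_i hk
    set m := (-k).toNat with hm
    have hmk : (m : ℤ) = -k := Int.toNat_of_nonneg (by omega)
    have hIcc : Finset.Icc (m+1) (2*m) = Finset.Ico (m+1) (2*m+1) := by
      rw [Finset.Ico_add_one_right_eq_Icc]
    rw [hIcc]
    have hg := sum_Ico_gauss (m+1) (2*m+1) (by omega)
    zify at hg
    push_cast
    nlinarith [hg, hmk]

lemma stair_inj {a b : ℤ} (h : stair a = stair b) : a = b := by
  have ha := sum_stair a
  have hb := sum_stair b
  rw [h] at ha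
  have key : (a - b) * (3*(a+b) - 1) = 0 := by linear_combination hb - ha
  rcases mul_eq_zero.1 key with h' | h'
  · omega
  · omega

/-! ### lattice involution -/

def lat1 (i j : ℤ) : ℤ := (i - 4*j + 1) / 3
def lat2 (i j : ℤ) : ℤ := (1 - 2*i - j) / 3

/-! ### the main pair involution -/

lemma lat_spec {i j : ℤ} {N : ℕ} (hN : N % 3 = 2)
    (hsum : (stair i).sum id + (dbl (stair j)).sum id = N) :
    ((stair (lat1 i j)).sum id + (dbl (stair (lat2 i j))).sum id = N) ∧
    lat1 (lat1 i j) (lat2 i j) = i ∧ lat2 (lat1 i j) (lat2 i j) = j ∧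
    ¬(lat1 i j = i ∧ lat2 i j = j) := by
  have eA := sum_stair i
  have eB := sum_stair j
  have eS : (((stair i).sum id : ℕ) : ℤ) + 2*(((stair j).sum id : ℕ) : ℤ) = (N:ℤ) := by
    rw [sum_dbl] at hsum
    exact_mod_cast hsum
  have hkey : i + 2*j = 3*(i^2 + 2*j^2) - 2*(N:ℤ) := by
    linear_combination eA + 2*eB - 2*eS
  obtain ⟨K, hK⟩ : ∃ K : ℤ, i^2 + 2*j^2 = K := ⟨_, rfl⟩
  rw [hK] at hkey
  have div1 : (3:ℤ) ∣ (i - 4*j + 1) := by omega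
  have div2 : (3:ℤ) ∣ (1 - 2*i - j) := by omega
  have e1 : 3 * lat1 i j = i - 4*j + 1 := Int.mul_ediv_cancel' div1
  have e2 : 3 * lat2 i j = 1 - 2*i - j := Int.mul_ediv_cancel' div2
  set i' := lat1 i j with hi'
  set j' := lat2 i j with hj'
  have ea' := sum_stair i'
  have eb' := sum_stair j'
  have s1 : (3*i')^2 = (i - 4*j + 1)^2 := by rw [e1]
  have s2 : (3*j')^2 = (1 - 2*i - j)^2 := by rw [e2]
  have goal18 : 18*(((stair i').sum id : ℕ) : ℤ) + 36*(((stair j').sum id : ℕ) : ℤ) = 18*(N:ℤ) := by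
    linear_combination 9*ea' + 18*eb' + 3*s1 + 6*s2 - 3*e1 - 6*e2 - 9*eA - 18*eB + 18*eS
  refine ⟨?_, ?_, ?_, ?_⟩
  · rw [sum_dbl]
    have h3 : (((stair i').sum id : ℕ) : ℤ) + 2*(((stair j').sum id : ℕ) : ℤ) = (N:ℤ) := by linarith
    exact_mod_cast h3
  · have h3 : i' - 4*j' + 1 = 3*i := by linarith
    rw [lat1, h3, Int.mul_ediv_cancel_left _ (by norm_num)]
  · have h3 : 1 - 2*i' - j' = 3*j := by linarith
    rw [lat2, h3, Int.mul_ediv_cancel_left _ (by norm_num)]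
  · rintro ⟨h1, h2⟩
    rw [h1] at e1
    omega

lemma key3 {N : ℕ} (hN : N % 3 = 2) :
    (DP (fun _ => True) (fun x => 2 ∣ x) N).card % 2 = 0 := by
  set s := DP (fun _ => True) (fun x => 2 ∣ x) N with hsdef
  set phi : Finset ℕ × Finset ℕ → Finset ℕ × Finset ℕ := fun p =>
    if franklin p.1 ≠ p.1 then (franklin p.1, p.2)
    else if franklin (hlf p.2) ≠ hlf p.2 then (p.1, dbl (franklin (hlf p.2)))
    else if h : (∃ a : ℤ, p.1 = stair a) ∧ (∃ b : ℤ, hlf p.2 = stair b) then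
      (stair (lat1 h.1.choose h.2.choose), dbl (stair (lat2 h.1.choose h.2.choose)))
    else p with hphi
  -- evaluation lemmas
  have phi1 : ∀ p : Finset ℕ × Finset ℕ, franklin p.1 ≠ p.1 → phi p = (franklin p.1, p.2) := by
    intro p h
    rw [hphi]; dsimp only; rw [if_pos h]
  have phi2 : ∀ p : Finset ℕ × Finset ℕ, franklin p.1 = p.1 → franklin (hlf p.2) ≠ hlf p.2 →
      phi p = (p.1, dbl (franklin (hlf p.2))) := by
    intro p h1 h2
    rw [hphi]; dsimp only; rw [if_neg (not_not_intro h1), if_pos h2]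
  have phi3 : ∀ (p : Finset ℕ × Finset ℕ)
      (h : (∃ a : ℤ, p.1 = stair a) ∧ (∃ b : ℤ, hlf p.2 = stair b)),
      franklin p.1 = p.1 → franklin (hlf p.2) = hlf p.2 →
      phi p = (stair (lat1 h.1.choose h.2.choose), dbl (stair (lat2 h.1.choose h.2.choose))) := by
    intro p h h1 h2
    rw [hphi]; dsimp only; rw [if_neg (not_not_intro h1), if_neg (not_not_intro h2), dif_pos h]
  -- member facts
  have hfacts : ∀ p ∈ s, 0 ∉ p.1 ∧ 0 ∉ hlf p.2 ∧ (∀ x ∈ p.2, 2 ∣ x) ∧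
      dbl (hlf p.2) = p.2 ∧ 2 * (hlf p.2).sum id = p.2.sum id := by
    intro p hp
    obtain ⟨hg1, hg2, hsum⟩ := mem_DP.1 hp
    have h1 : 0 ∉ p.1 := fun h => by have := (hg1 0 h).1; omega
    have heven : ∀ x ∈ p.2, 2 ∣ x := fun x hx => (hg2 x hx).2
    have h2 : 0 ∉ hlf p.2 := by
      intro h
      obtain ⟨y, hy, hy2⟩ := Finset.mem_image.1 h
      have := (hg2 y hy).1
      have := (hg2 y hy).2
      omega
    have h3 : dbl (hlf p.2) = p.2 := dbl_hlf heven
    refine ⟨h1, h2, heven, h3, ?_⟩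
    conv_rhs => rw [← h3]
    rw [sum_dbl]
  -- goodness of stair-pairs
  have hstairmem : ∀ (a b : ℤ), (stair a).sum id + (dbl (stair b)).sum id = N →
      ((stair a, dbl (stair b)) : Finset ℕ × Finset ℕ) ∈ s := by
    intro a b hab
    refine mem_DP.2 ⟨?_, ?_, hab⟩
    · intro x hx
      constructor
      · have := stair_nz a
        rcases Nat.eq_zero_or_pos x with h | h
        · exact absurd (h ▸ hx) this
        · exact h
      · trivial
    · intro x hx
      obtain ⟨y, hy, rfl⟩ := Finset.mem_image.1 hx
      have : 0 < y := by
        have := stair_nz b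
        rcases Nat.eq_zero_or_pos y with h | h
        · exact absurd (h ▸ hy) this
        · exact h
      exact ⟨by omega, by omega⟩
  -- the one-step analysis
  have hstep : ∀ p ∈ s, phi p ∈ s ∧ phi (phi p) = p ∧ phi p ≠ p := by
    intro p hp
    obtain ⟨hg1, hg2, hsum⟩ := mem_DP.1 hp
    obtain ⟨h0C, h0H, heven, hdh, hsumh⟩ := hfacts p hp
    by_cases h1 : franklin p.1 = p.1
    · by_cases h2 : franklin (hlf p.2) = hlf p.2
      · -- branch 3
        have hex : (∃ a : ℤ, p.1 = stair a) ∧ (∃ b : ℤ, hlf p.2 = stair b) := by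
          constructor
          · obtain ⟨a, ha⟩ := franklin_fix h0C h1
            exact ⟨a, ha⟩
          · obtain ⟨b, hb⟩ := franklin_fix h0H h2
            exact ⟨b, hb⟩
        have hCs : p.1 = stair hex.1.choose := hex.1.choose_spec
        have hHs : hlf p.2 = stair hex.2.choose := hex.2.choose_spec
        have hDs : p.2 = dbl (stair hex.2.choose) := by rw [← hHs, hdh]
        have hsum' : (stair hex.1.choose).sum id + (dbl (stair hex.2.choose)).sum id = N := by
          rw [← hCs, ← hDs]; exact hsum
        obtain ⟨hs1, hback1, hback2, hnofix⟩ := lat_spec hN hsum'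
        have hval := phi3 p hex h1 h2
        refine ⟨?_, ?_, ?_⟩
        · rw [hval]
          exact hstairmem _ _ hs1
        · rw [hval]
          set i' := lat1 hex.1.choose hex.2.choose with hi'
          set j' := lat2 hex.1.choose hex.2.choose with hj'
          have q1 : franklin (stair i') = stair i' := franklin_stair i'
          have q2 : hlf (dbl (stair j')) = stair j' := hlf_dbl _
          have hex' : (∃ a : ℤ, (stair i', dbl (stair j')).1 = stair a) ∧
              (∃ b : ℤ, hlf (stair i', dbl (stair j')).2 = stair b) := by
            exact ⟨⟨i', rfl⟩, ⟨j', q2⟩⟩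
          have hval2 := phi3 (stair i', dbl (stair j')) hex' q1 (by rw [q2]; exact franklin_stair j')
          rw [hval2]
          have hia : hex'.1.choose = i' := stair_inj hex'.1.choose_spec.symm
          have hjb : hex'.2.choose = j' :=
            (stair_inj (q2.symm.trans hex'.2.choose_spec)).symm
          rw [hia, hjb, hback1, hback2, ← hCs, ← hDs]
        · rw [hval]
          intro hq
          have hq1 : stair (lat1 hex.1.choose hex.2.choose) = p.1 := congrArg Prod.fst hq
          have hq2 : dbl (stair (lat2 hex.1.choose hex.2.choose)) = p.2 := congrArg Prod.snd hq
          exact hnofix ⟨stair_inj (hq1.trans hCs), stair_inj (dbl_inj (hq2.trans hDs))⟩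
      · -- branch 2
        have hval := phi2 p h1 h2
        refine ⟨?_, ?_, ?_⟩
        · rw [hval]
          refine mem_DP.2 ⟨hg1, ?_, ?_⟩
          · intro x hx
            obtain ⟨y, hy, rfl⟩ := Finset.mem_image.1 hx
            have h0' : 0 ∉ franklin (hlf p.2) := franklin_nz h0H
            have : 0 < y := by
              rcases Nat.eq_zero_or_pos y with h | h
              · exact absurd (h ▸ hy) h0'
              · exact h
            exact ⟨by omega, by omega⟩
          · have e1 : (dbl (franklin (hlf p.2))).sum id = 2 * (franklin (hlf p.2)).sum id :=
              sum_dbl _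
            have e2 : (franklin (hlf p.2)).sum id = (hlf p.2).sum id := franklin_sum h0H
            dsimp only
            omega
        · rw [hval]
          have q1 : hlf (dbl (franklin (hlf p.2))) = franklin (hlf p.2) := hlf_dbl _
          have hval2 := phi2 (p.1, dbl (franklin (hlf p.2))) h1 (by
            rw [q1, franklin_invol h0H]
            exact fun h => h2 h.symm)
          rw [hval2]
          dsimp only
          rw [q1, franklin_invol h0H, hdh]
        · rw [hval]
          intro hq
          have hq2 : dbl (franklin (hlf p.2)) = p.2 := congrArg Prod.snd hq
          exact h2 (dbl_inj (hq2.trans hdh.symm))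
    · -- branch 1
      have hval := phi1 p h1
      refine ⟨?_, ?_, ?_⟩
      · rw [hval]
        refine mem_DP.2 ⟨?_, hg2, ?_⟩
        · intro x hx
          have h0' : 0 ∉ franklin p.1 := franklin_nz h0C
          constructor
          · rcases Nat.eq_zero_or_pos x with h | h
            · exact absurd (h ▸ hx) h0'
            · exact h
          · trivial
        · have e1 : (franklin p.1).sum id = p.1.sum id := franklin_sum h0C
          dsimp only
          omega
      · rw [hval]
        have hval2 := phi1 (franklin p.1, p.2) (by
          dsimp only
          rw [franklin_invol h0C]
          exact fun h => h1 h.symm)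
        rw [hval2]
        dsimp only
        rw [franklin_invol h0C]
      · rw [hval]
        intro hq
        exact h1 (congrArg Prod.fst hq)
  have hpar := card_modEq_fixed (s.card) s phi le_rfl (fun p hp => (hstep p hp).1)
    (fun p hp => (hstep p hp).2.1)
  rw [hpar]
  have hempty : s.filter (fun p => phi p = p) = ∅ := by
    rw [Finset.filter_eq_empty_iff]
    intro p hp
    exact (hstep p hp).2.2
  rw [hempty]
  simp

/-! ### decomposition for the strong induction -/

def allowedP (x : ℕ) : Prop := x % 12 ≠ 2 ∧ x % 12 ≠ 10

lemma induction_step (n : ℕ)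
    (IH : ∀ m, m < n → (DS allowedP (3*m+2)).card % 2 = 0) :
    (DS allowedP (3*n+2)).card % 2 = (DP allowedP (fun x => 6 ∣ x) (3*n+2)).card % 2 := by
  set N := 3*n+2 with hN
  set s := DP allowedP (fun x => 6 ∣ x) N with hs
  have hsplit := Finset.card_filter_add_card_filter_not
    (s := s) (p := fun p => p.2 = ∅)
  -- the empty-second-component part
  have hpart1 : (s.filter (fun p => p.2 = ∅)).card = (DS allowedP N).card := by
    refine Finset.card_bij' (fun p _ => p.1) (fun A _ => (A, (∅ : Finset ℕ))) ?_ ?_ ?_ ?_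
    · intro p hp
      obtain ⟨hp, h2⟩ := Finset.mem_filter.1 hp
      obtain ⟨hg1, hg2, hsum⟩ := mem_DP.1 hp
      refine mem_DS.2 ⟨hg1, ?_⟩
      rw [h2] at hsum
      simpa using hsum
    · intro A hA
      obtain ⟨hg, hsum⟩ := mem_DS.1 hA
      refine Finset.mem_filter.2 ⟨mem_DP.2 ⟨hg, ?_, ?_⟩, rfl⟩
      · intro x hx
        exact absurd hx (Finset.notMem_empty _)
      · simpa using hsum
    · intro p hp
      obtain ⟨hp, h2⟩ := Finset.mem_filter.1 hp
      exact Prod.ext rfl h2.symm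
    · intro A hA
      rfl
  -- the nonempty-second-component part is even
  have hpart2 : (s.filter (fun p => ¬ p.2 = ∅)).card % 2 = 0 := by
    set t := ((Finset.range (N+1)).powerset).filter
      (fun B => B ≠ ∅ ∧ good (fun x => 6 ∣ x) B) with ht
    have hmaps : ∀ p ∈ s.filter (fun p => ¬ p.2 = ∅), p.2 ∈ t := by
      intro p hp
      obtain ⟨hp, h2⟩ := Finset.mem_filter.1 hp
      obtain ⟨hg1, hg2, hsum⟩ := mem_DP.1 hp
      refine Finset.mem_filter.2 ⟨Finset.mem_powerset.2 ?_, h2, hg2⟩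
      intro x hx
      refine Finset.mem_range.2 ?_
      have h3 := le_sum_of_mem hx
      omega
    rw [Finset.card_eq_sum_card_fiberwise hmaps, Finset.sum_nat_mod]
    have hzero : ∀ B ∈ t,
        ((s.filter (fun p => ¬ p.2 = ∅)).filter (fun p => p.2 = B)).card % 2 = 0 := by
      intro B hB
      obtain ⟨hBr, hBne, hBg⟩ := Finset.mem_filter.1 hB
      by_cases hble : B.sum id ≤ N
      · -- fiber is DS allowedP (N - B.sum id)
        have hfib : ((s.filter (fun p => ¬ p.2 = ∅)).filter (fun p => p.2 = B)).card
            = (DS allowedP (N - B.sum id)).card := by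
          refine Finset.card_bij' (fun p _ => p.1) (fun A _ => (A, B)) ?_ ?_ ?_ ?_
          · intro p hp
            obtain ⟨hp, h2⟩ := Finset.mem_filter.1 hp
            obtain ⟨hp, _⟩ := Finset.mem_filter.1 hp
            obtain ⟨hg1, hg2, hsum⟩ := mem_DP.1 hp
            refine mem_DS.2 ⟨hg1, ?_⟩
            rw [h2] at hsum
            omega
          · intro A hA
            obtain ⟨hg, hsum⟩ := mem_DS.1 hA
            refine Finset.mem_filter.2 ⟨Finset.mem_filter.2 ⟨mem_DP.2 ⟨hg, hBg, ?_⟩, ?_⟩, rfl⟩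
            · dsimp only
              omega
            · exact hBne
          · intro p hp
            obtain ⟨hp, h2⟩ := Finset.mem_filter.1 hp
            exact Prod.ext rfl h2.symm
          · intro A hA
            rfl
        rw [hfib]
        -- use the induction hypothesis
        have hpos : 0 < B.sum id := by
          refine Finset.sum_pos ?_ (Finset.nonempty_iff_ne_empty.2 hBne)
          intro i hi
          exact (hBg i hi).1
        have hdvd : 6 ∣ B.sum id := by
          refine Finset.dvd_sum ?_
          intro i hi
          exact (hBg i hi).2
        obtain ⟨m, hm1, hm2⟩ : ∃ m, N - B.sum id = 3*m+2 ∧ m < n := by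
          obtain ⟨e, he⟩ := hdvd
          refine ⟨n - 2*e, ?_, ?_⟩ <;> omega
        rw [hm1]
        exact IH m hm2
      · -- fiber is empty
        have hfib : ((s.filter (fun p => ¬ p.2 = ∅)).filter (fun p => p.2 = B)) = ∅ := by
          rw [Finset.filter_eq_empty_iff]
          intro p hp
          obtain ⟨hp, h2⟩ := Finset.mem_filter.1 hp
          obtain ⟨hg1, hg2, hsum⟩ := mem_DP.1 hp
          intro hq
          rw [hq] at hsum
          omega
        rw [hfib]
        simp
    rw [Finset.sum_congr rfl hzero]
    simp
  omega

lemma DP_congr {P P' T T' : ℕ → Prop} (h : ∀ x, 0 < x → (P x ↔ P' x))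
    (h' : ∀ x, 0 < x → (T x ↔ T' x)) (n : ℕ) : DP P T n = DP P' T' n := by
  ext p
  rw [mem_DP, mem_DP, good_congr h, good_congr h']

lemma main_even : ∀ n : ℕ, (DS allowedP (3*n+2)).card % 2 = 0 := by
  intro n
  induction n using Nat.strong_induction_on with
  | _ n IH =>
  rw [induction_step n IH]
  have h1 := toggle allowedP (fun x => 6 ∣ x) (fun x => 12 ∣ x)
    (fun x hx => ⟨by omega, by omega⟩)
    (fun x => ⟨fun h => ⟨x/2, by omega, by omega⟩, fun ⟨y, hy, hxy⟩ => by omega⟩) (3*n+2)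
  have h2 := merge (fun x => allowedP x ∧ ¬ 6 ∣ x) (fun x => 12 ∣ x)
    (fun x hP hT => hP.2 (by omega)) (3*n+2)
  have h3 := DS_congr (P := fun x => (allowedP x ∧ ¬ 6 ∣ x) ∨ 12 ∣ x)
    (P' := fun x => ¬ 2 ∣ x ∨ 4 ∣ x) (fun x hx => by unfold allowedP; omega) (3*n+2)
  have h4 := merge (fun x => ¬ 2 ∣ x) (fun x => 4 ∣ x)
    (fun x hP hT => hP (by omega)) (3*n+2)
  have h5 := toggle (fun _ => True) (fun x => 2 ∣ x) (fun x => 4 ∣ x)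
    (fun x hx => trivial)
    (fun x => ⟨fun h => ⟨x/2, by omega, by omega⟩, fun ⟨y, hy, hxy⟩ => by omega⟩) (3*n+2)
  have h6 : DP (fun x => True ∧ ¬ 2 ∣ x) (fun x => 4 ∣ x) (3*n+2)
      = DP (fun x => ¬ 2 ∣ x) (fun x => 4 ∣ x) (3*n+2) :=
    DP_congr (fun x hx => by tauto) (fun x hx => Iff.rfl) _
  have h7 := key3 (N := 3*n+2) (by omega)
  rw [h6] at h5
  rw [h3] at h2
  omega

end Stmt7

end Stmt7Aux

/-- `Q t s n` is the number of partitions of `n` into distinct parts such that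
no part is congruent to `s` or `t - s` modulo `t`. -/
noncomputable def Q (t s n : ℕ) : ℕ :=
  Nat.card {p : n.Partition // p.parts.Nodup ∧
    ∀ x ∈ p.parts, x % t ≠ s % t ∧ x % t ≠ (t - s) % t}

theorem stmt7 (n : ℕ) : Q 12 2 (3 * n + 2) ≡ 0 [MOD 2] := by
  have key : Q 12 2 (3*n+2) = (Stmt7.DS Stmt7.allowedP (3*n+2)).card := by
    rw [Q]
    have e : {p : (3*n+2).Partition // p.parts.Nodup ∧
        ∀ x ∈ p.parts, x % 12 ≠ 2 % 12 ∧ x % 12 ≠ (12 - 2) % 12}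
        ≃ {A : Finset ℕ // A ∈ Stmt7.DS Stmt7.allowedP (3*n+2)} := by
      refine ⟨fun p => ⟨⟨p.1.parts, p.2.1⟩, ?_⟩,
        fun A => ⟨⟨(A.1).1, fun {i} hi => ?_, ?_⟩, ?_, ?_⟩, ?_, ?_⟩
      · refine Stmt7.mem_DS.2 ⟨?_, ?_⟩
        · intro x hx
          have hx' : x ∈ p.1.parts := hx
          refine ⟨p.1.parts_pos hx', ?_, ?_⟩
          · have := (p.2.2 x hx').1
            omega
          · have := (p.2.2 x hx').2
            omega
        · show (Multiset.map id p.1.parts).sum = 3*n+2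
          rw [Multiset.map_id]
          exact p.1.parts_sum
      · exact ((Stmt7.mem_DS.1 A.2).1 i hi).1
      · have := (Stmt7.mem_DS.1 A.2).2
        show (A.1).1.sum = 3*n+2
        rw [← Multiset.map_id ((A.1).1)]
        exact this
      · exact A.1.nodup
      · intro x hx
        have hall := ((Stmt7.mem_DS.1 A.2).1 x hx).2
        unfold Stmt7.allowedP at hall
        omega
      · intro p
        rfl
      · intro A
        rfl
    rw [Nat.card_congr e, Nat.card_eq_finsetCard]
  have h := Stmt7.main_even n
  rw [Nat.ModEq]
  omega
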